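/- The functional J is strictly convex on 𝒫: if (u, x₀) and (u', x₀') belong to 𝒫 and are distinct as elements of L²[0,1] × ℝ^m (i.e. u ≠ u' in L² or x₀ ≠ x₀'), then for every α ∈ (0,1), J(α u + (1−α) u', α x₀ + (1−α) x₀') < α J(u, x₀) + (1−α) J(u', x₀'). -/

import Mathlib

open MeasureTheory Set

noncomputable section

/-- One integration from `0`. -/
def Dinv (u : ℝ → ℝ) : ℝ → ℝ := fun x => ∫ s in (0 : ℝ)..x, u s

/-- The `m`-fold iterated integral operator `D^{-m}`. -/
def DmInv (m : ℕ) (u : ℝ → ℝ) : ℝ → ℝ := Dinv^[m] u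

/-- `z_{(u,x₀)}(t) = (D^{-m}u)(t) + θ(t)ᵀ x₀` with
`θ(t) = (1, t, t²/2!, …, t^{m-1}/(m-1)!)ᵀ`. -/
def zfun (m : ℕ) (u : ℝ → ℝ) (x0 : EuclideanSpace ℝ (Fin m)) : ℝ → ℝ :=
  fun t => DmInv m u t + ∑ j : Fin m, x0 j * t ^ (j : ℕ) / ((j : ℕ).factorial : ℝ)

/-- The exceptional set `𝒩 = {t ∈ [0,1] : f₀^{(m)}(t) = 0}`. -/
def Nset (m : ℕ) (f0 : ℝ → ℝ) : Set ℝ :=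
  {s ∈ Icc (0 : ℝ) 1 | iteratedDeriv m f0 s = 0}

/-- Membership in the constraint set `𝒫`:
`u ∈ L²[0,1]`, `‖x₀‖ ≤ μ`, `z_{(u,x₀)}/f₀^{(m)} ≥ ε` on `[0,1] ∖ 𝒩`, and
`(z_{(u,x₀)}/f₀^{(m)})^{-1/(2m)}` Lebesgue integrable on `[0,1] ∖ 𝒩`. -/
def memP (m : ℕ) (f0 : ℝ → ℝ) (μ ε : ℝ)
    (u : ℝ → ℝ) (x0 : EuclideanSpace ℝ (Fin m)) : Prop :=
  MemLp u 2 (volume.restrict (Icc (0 : ℝ) 1)) ∧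
  ‖x0‖ ≤ μ ∧
  (∀ t ∈ Icc (0 : ℝ) 1 \ Nset m f0, ε ≤ zfun m u x0 t / iteratedDeriv m f0 t) ∧
  IntegrableOn
    (fun t => (zfun m u x0 t / iteratedDeriv m f0 t) ^ (-(1 : ℝ) / (2 * m)))
    (Icc (0 : ℝ) 1 \ Nset m f0) volume

/-- The objective functional
`J(u, x₀) = ∫₀¹ r² u² + L₀ ∫_{[0,1]∖𝒩} r^{1-1/(2m)} (z_{(u,x₀)}/f₀^{(m)})^{-1/(2m)}`. -/
def Jfun (m : ℕ) (r f0 : ℝ → ℝ) (L0 : ℝ)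
    (u : ℝ → ℝ) (x0 : EuclideanSpace ℝ (Fin m)) : ℝ :=
  (∫ t in Icc (0 : ℝ) 1, r t ^ 2 * u t ^ 2) +
    L0 * ∫ t in Icc (0 : ℝ) 1 \ Nset m f0,
      r t ^ ((1 : ℝ) - 1 / (2 * m)) *
        (zfun m u x0 t / iteratedDeriv m f0 t) ^ (-(1 : ℝ) / (2 * m))

/- ### Auxiliary lemmas -/

lemma JSC_uIcc01 : uIcc (0:ℝ) 1 = Icc 0 1 := uIcc_of_le zero_le_one

lemma DmInv_succ (k : ℕ) (u : ℝ → ℝ) : DmInv (k+1) u = Dinv (DmInv k u) := by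
  simp [DmInv, Function.iterate_succ_apply']

lemma dinv_continuousOn (u : ℝ → ℝ) (hu : IntegrableOn u (Icc 0 1)) :
    ContinuousOn (Dinv u) (Icc 0 1) := by
  have := intervalIntegral.continuousOn_primitive_interval (a := (0:ℝ)) (b := 1) (μ := volume)
    (f := u) (by rwa [JSC_uIcc01])
  rwa [JSC_uIcc01] at this

lemma dmInv_continuousOn (u : ℝ → ℝ) (hu : IntegrableOn u (Icc 0 1)) :
    ∀ k, 1 ≤ k → ContinuousOn (DmInv k u) (Icc 0 1) := by
  intro k hk
  induction k with
  | zero => omega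
  | succ n ih =>
    rw [DmInv_succ]
    rcases Nat.eq_zero_or_pos n with h0 | hpos
    · subst h0; exact dinv_continuousOn u hu
    · exact dinv_continuousOn _ ((ih hpos).integrableOn_compact isCompact_Icc)

lemma dmInv_integrableOn (u : ℝ → ℝ) (hu : IntegrableOn u (Icc 0 1)) (k : ℕ) :
    IntegrableOn (DmInv k u) (Icc 0 1) := by
  rcases Nat.eq_zero_or_pos k with h0 | hpos
  · subst h0; exact hu
  · exact (dmInv_continuousOn u hu k hpos).integrableOn_compact isCompact_Icc

lemma intervalIntegrable_of_Icc {f : ℝ → ℝ} (hf : IntegrableOn f (Icc 0 1)) {t : ℝ}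
    (ht : t ∈ Icc (0:ℝ) 1) : IntervalIntegrable f volume 0 t := by
  rw [intervalIntegrable_iff, uIoc_of_le ht.1]
  exact hf.mono_set (fun x hx => ⟨le_of_lt hx.1, le_trans hx.2 ht.2⟩)

lemma dmInv_linear (u u' : ℝ → ℝ) (hu : IntegrableOn u (Icc 0 1))
    (hu' : IntegrableOn u' (Icc 0 1)) (a b : ℝ) (k : ℕ) :
    ∀ t ∈ Icc (0:ℝ) 1, DmInv k (fun s => a * u s + b * u' s) t
      = a * DmInv k u t + b * DmInv k u' t := by
  induction k with
  | zero => intro t _; simp [DmInv]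
  | succ n ih =>
    intro t ht
    rw [DmInv_succ, DmInv_succ, DmInv_succ]
    have h1 : IntervalIntegrable (DmInv n u) volume 0 t :=
      intervalIntegrable_of_Icc (dmInv_integrableOn u hu n) ht
    have h2 : IntervalIntegrable (DmInv n u') volume 0 t :=
      intervalIntegrable_of_Icc (dmInv_integrableOn u' hu' n) ht
    have hsub : uIcc 0 t ⊆ Icc (0:ℝ) 1 := by
      rw [uIcc_of_le ht.1]; exact Icc_subset_Icc le_rfl ht.2
    have : Dinv (DmInv n (fun s => a * u s + b * u' s)) t
        = ∫ s in (0:ℝ)..t, a * DmInv n u s + b * DmInv n u' s := by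
      apply intervalIntegral.integral_congr
      intro s hs
      exact ih s (hsub hs)
    rw [this, intervalIntegral.integral_add (h1.const_mul a) (h2.const_mul b),
      intervalIntegral.integral_const_mul, intervalIntegral.integral_const_mul]
    rfl

lemma dmInv_congr (u u' : ℝ → ℝ)
    (h : u =ᵐ[volume.restrict (Icc (0:ℝ) 1)] u') (k : ℕ) (hk : 1 ≤ k) :
    ∀ t ∈ Icc (0:ℝ) 1, DmInv k u t = DmInv k u' t := by
  induction k with
  | zero => omega
  | succ n ih =>
    intro t ht
    rw [DmInv_succ, DmInv_succ]
    rcases Nat.eq_zero_or_pos n with h0 | hpos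
    · subst h0
      simp only [DmInv, Function.iterate_zero, id]
      apply intervalIntegral.integral_congr_ae
      have hae : ∀ᵐ x ∂volume, x ∈ Icc (0:ℝ) 1 → u x = u' x :=
        (ae_restrict_iff' measurableSet_Icc).mp h
      filter_upwards [hae] with x hx hmem
      apply hx
      rw [uIoc_of_le ht.1] at hmem
      exact ⟨le_of_lt hmem.1, le_trans hmem.2 ht.2⟩
    · apply intervalIntegral.integral_congr
      intro s hs
      apply ih hpos
      rw [uIcc_of_le ht.1] at hs
      exact ⟨hs.1, le_trans hs.2 ht.2⟩

lemma strictConvexOn_rpow_neg {p : ℝ} (hp : p < 0) :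
    StrictConvexOn ℝ (Ioi (0:ℝ)) fun x : ℝ => x ^ p := by
  apply strictConvexOn_of_deriv2_pos' (convex_Ioi 0)
  · intro x hx
    exact (Real.continuousAt_rpow_const x p (Or.inl (ne_of_gt hx))).continuousWithinAt
  · intro x hx
    have hx0 : (0:ℝ) < x := hx
    have hd1 : deriv (fun y : ℝ => y ^ p) =ᶠ[nhds x] fun y => p * y ^ (p - 1) := by
      filter_upwards [eventually_ne_nhds (ne_of_gt hx0)] with y hy
      exact (Real.hasDerivAt_rpow_const (Or.inl hy)).deriv
    have hd2 : deriv (deriv (fun y : ℝ => y ^ p)) x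
        = deriv (fun y : ℝ => p * y ^ (p - 1)) x := Filter.EventuallyEq.deriv_eq hd1
    have hd3 : deriv (fun y : ℝ => p * y ^ (p - 1)) x = p * ((p - 1) * x ^ (p - 1 - 1)) := by
      rw [deriv_const_mul _ ((Real.hasDerivAt_rpow_const
        (Or.inl (ne_of_gt hx0))).differentiableAt)]
      rw [(Real.hasDerivAt_rpow_const (p := p - 1) (Or.inl (ne_of_gt hx0))).deriv]
    have hit : deriv^[2] (fun y : ℝ => y ^ p) x = p * ((p - 1) * x ^ (p - 1 - 1)) := by
      rw [Function.iterate_succ, Function.iterate_one, Function.comp_apply, hd2, hd3]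
    rw [hit]
    have h1 : 0 < p * (p - 1) := mul_pos_of_neg_of_neg hp (by linarith)
    have h2 : 0 < x ^ (p - 1 - 1) := Real.rpow_pos_of_pos hx0 _
    nlinarith

lemma JSC_finite_zero_set {m : ℕ} (c : Fin m → ℝ) (j0 : Fin m) (hc : c j0 ≠ 0) :
    {t : ℝ | ∑ j : Fin m, c j * t ^ (j : ℕ) = 0}.Finite := by
  set q : Polynomial ℝ := ∑ j : Fin m, Polynomial.C (c j) * Polynomial.X ^ (j : ℕ) with hq
  have heval : ∀ t : ℝ, q.eval t = ∑ j : Fin m, c j * t ^ (j : ℕ) := by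
    intro t; simp [hq, Polynomial.eval_finset_sum]
  have hcoeff : q.coeff (j0 : ℕ) = c j0 := by
    rw [hq, Polynomial.finset_sum_coeff]
    rw [Finset.sum_eq_single j0]
    · simp
    · intro j _ hj
      simp [Polynomial.coeff_X_pow]
      intro h; exact absurd (Fin.ext h) (Ne.symm hj)
    · intro h; exact absurd (Finset.mem_univ j0) h
  have hq0 : q ≠ 0 := fun h => hc (by rw [← hcoeff, h]; simp)
  apply (q.finite_setOf_isRoot hq0).subset
  intro t ht
  simp only [mem_setOf_eq, Polynomial.IsRoot.def, heval]
  exact ht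

lemma zfun_continuousOn (m : ℕ) (hm : 1 ≤ m) (u : ℝ → ℝ) (x0 : EuclideanSpace ℝ (Fin m))
    (hu : IntegrableOn u (Icc 0 1)) : ContinuousOn (zfun m u x0) (Icc 0 1) := by
  apply (dmInv_continuousOn u hu m hm).add
  exact (continuous_finset_sum _ fun j _ =>
    ((continuous_const.mul (continuous_pow _)).div_const _)).continuousOn

lemma zfun_linear (m : ℕ) (u u' : ℝ → ℝ) (hu : IntegrableOn u (Icc 0 1))
    (hu' : IntegrableOn u' (Icc 0 1)) (x0 x0' : EuclideanSpace ℝ (Fin m)) (a b : ℝ)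
    {t : ℝ} (ht : t ∈ Icc (0:ℝ) 1) :
    zfun m (fun s => a * u s + b * u' s) (a • x0 + b • x0') t
      = a * zfun m u x0 t + b * zfun m u' x0' t := by
  unfold zfun
  rw [dmInv_linear u u' hu hu' a b m t ht]
  have hsum : ∑ j : Fin m, (a • x0 + b • x0') j * t ^ (j:ℕ) / ((j:ℕ).factorial : ℝ)
      = a * ∑ j : Fin m, x0 j * t ^ (j:ℕ) / ((j:ℕ).factorial : ℝ)
        + b * ∑ j : Fin m, x0' j * t ^ (j:ℕ) / ((j:ℕ).factorial : ℝ) := by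
    rw [Finset.mul_sum, Finset.mul_sum, ← Finset.sum_add_distrib]
    apply Finset.sum_congr rfl
    intro j _
    have happ : (a • x0 + b • x0') j = a * x0 j + b * x0' j := rfl
    rw [happ]; ring
  rw [hsum]; ring

theorem J_strictly_convex
    (m : ℕ) (hm : 1 ≤ m)
    (r : ℝ → ℝ) (hrc : ContinuousOn r (Icc 0 1))
    (hrpos : ∀ t ∈ Icc (0 : ℝ) 1, 0 < r t)
    (L0 : ℝ) (hL0 : 0 < L0)
    (f0 : ℝ → ℝ) (hf0 : ContDiff ℝ (2 * m) f0)
    (hN : volume (Nset m f0) = 0)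
    (μ ε : ℝ) (hμ : 0 < μ) (hε : 0 < ε)
    (u u' : ℝ → ℝ) (x0 x0' : EuclideanSpace ℝ (Fin m))
    (hu : memP m f0 μ ε u x0) (hu' : memP m f0 μ ε u' x0')
    (hdist : ¬(u =ᵐ[volume.restrict (Icc (0 : ℝ) 1)] u' ∧ x0 = x0'))
    (α : ℝ) (hα : α ∈ Ioo (0 : ℝ) 1) :
    Jfun m r f0 L0 (fun t => α * u t + (1 - α) * u' t) (α • x0 + (1 - α) • x0') <
      α * Jfun m r f0 L0 u x0 + (1 - α) * Jfun m r f0 L0 u' x0' := by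
  obtain ⟨hα0, hα1⟩ := hα
  have h1α : 0 < 1 - α := by linarith
  have hmR : (0:ℝ) < (m:ℝ) := by exact_mod_cast hm
  have hp : -(1:ℝ) / (2 * (m:ℝ)) < 0 := div_neg_of_neg_of_pos (by norm_num) (by linarith)
  have hm1R : (1:ℝ) ≤ (m:ℝ) := by exact_mod_cast hm
  have hγ : (0:ℝ) ≤ (1:ℝ) - 1 / (2 * (m:ℝ)) := by
    have h1 : 1 / (2 * (m:ℝ)) ≤ 1 := by
      rw [div_le_one (by linarith)]; linarith
    linarith
  -- measurability of the exceptional set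
  have hφcont : Continuous (iteratedDeriv m f0) :=
    hf0.continuous_iteratedDeriv m (by exact_mod_cast Nat.le_mul_of_pos_left m (by norm_num))
  have hNmeas : MeasurableSet (Nset m f0) := by
    have : Nset m f0 = Icc (0:ℝ) 1 ∩ (iteratedDeriv m f0) ⁻¹' {0} := by
      ext t; simp [Nset]
    rw [this]
    exact measurableSet_Icc.inter (hφcont.measurable (measurableSet_singleton 0))
  have hEmeas : MeasurableSet (Icc (0:ℝ) 1 \ Nset m f0) := measurableSet_Icc.diff hNmeas
  have hES : Icc (0:ℝ) 1 \ Nset m f0 ⊆ Icc (0:ℝ) 1 := diff_subset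
  have hφne : ∀ t ∈ Icc (0:ℝ) 1 \ Nset m f0, iteratedDeriv m f0 t ≠ 0 := by
    intro t ht h0
    exact ht.2 ⟨ht.1, h0⟩
  -- integrability of u, u' and the combination
  have huI : IntegrableOn u (Icc (0:ℝ) 1) := hu.1.integrable one_le_two
  have hu'I : IntegrableOn u' (Icc (0:ℝ) 1) := hu'.1.integrable one_le_two
  have hwI : IntegrableOn (fun t => α * u t + (1 - α) * u' t) (Icc (0:ℝ) 1) :=
    (huI.const_mul α).add (hu'I.const_mul (1 - α))
  -- bound on r
  obtain ⟨C, hC⟩ := isCompact_Icc.exists_bound_of_continuousOn hrc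
  have hrle : ∀ t ∈ Icc (0:ℝ) 1, r t ≤ C := fun t ht =>
    le_trans (le_abs_self _) (by simpa [Real.norm_eq_abs] using hC t ht)
  -- quadratic integrands are integrable
  have hrsqm : AEStronglyMeasurable (fun t => r t ^ 2) (volume.restrict (Icc (0:ℝ) 1)) :=
    (hrc.pow 2).aestronglyMeasurable measurableSet_Icc
  have hbound2 : ∀ᵐ t ∂(volume.restrict (Icc (0:ℝ) 1)), ‖r t ^ 2‖ ≤ C ^ 2 := by
    rw [ae_restrict_iff' measurableSet_Icc]
    refine ae_of_all _ fun t ht => ?_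
    have h1 : |r t| ≤ C := by simpa [Real.norm_eq_abs] using hC t ht
    rw [Real.norm_eq_abs, abs_pow]
    exact pow_le_pow_left₀ (abs_nonneg _) h1 2
  have hQu : IntegrableOn (fun t => r t ^ 2 * u t ^ 2) (Icc (0:ℝ) 1) :=
    hu.1.integrable_sq.bdd_mul hrsqm hbound2
  have hQu' : IntegrableOn (fun t => r t ^ 2 * u' t ^ 2) (Icc (0:ℝ) 1) :=
    hu'.1.integrable_sq.bdd_mul hrsqm hbound2
  have hQd : IntegrableOn (fun t => r t ^ 2 * (u t - u' t) ^ 2) (Icc (0:ℝ) 1) :=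
    (hu.1.sub hu'.1).integrable_sq.bdd_mul hrsqm hbound2
  -- quadratic identity
  have hQid : ∫ t in Icc (0:ℝ) 1, r t ^ 2 * (α * u t + (1 - α) * u' t) ^ 2
      = α * (∫ t in Icc (0:ℝ) 1, r t ^ 2 * u t ^ 2)
        + (1 - α) * (∫ t in Icc (0:ℝ) 1, r t ^ 2 * u' t ^ 2)
        - (α * (1 - α)) * ∫ t in Icc (0:ℝ) 1, r t ^ 2 * (u t - u' t) ^ 2 := by
    have hpt : (fun t => r t ^ 2 * (α * u t + (1 - α) * u' t) ^ 2)
        =ᵐ[volume.restrict (Icc (0:ℝ) 1)]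
        fun t => α * (r t ^ 2 * u t ^ 2) + (1 - α) * (r t ^ 2 * u' t ^ 2)
          - (α * (1 - α)) * (r t ^ 2 * (u t - u' t) ^ 2) :=
      ae_of_all _ fun t => by ring
    have hsumInt : Integrable (fun t => α * (r t ^ 2 * u t ^ 2)
        + (1 - α) * (r t ^ 2 * u' t ^ 2)) (volume.restrict (Icc (0:ℝ) 1)) :=
      (hQu.const_mul α).add (hQu'.const_mul (1 - α))
    rw [integral_congr_ae hpt,
      integral_sub hsumInt (hQd.const_mul _),
      integral_add (hQu.const_mul α) (hQu'.const_mul (1 - α)),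
      integral_const_mul, integral_const_mul, integral_const_mul]
  -- ratio linearity
  have hratio : ∀ t ∈ Icc (0:ℝ) 1 \ Nset m f0,
      zfun m (fun s => α * u s + (1 - α) * u' s) (α • x0 + (1 - α) • x0') t
          / iteratedDeriv m f0 t
        = α * (zfun m u x0 t / iteratedDeriv m f0 t)
          + (1 - α) * (zfun m u' x0' t / iteratedDeriv m f0 t) := by
    intro t ht
    rw [zfun_linear m u u' huI hu'I x0 x0' α (1 - α) (hES ht), add_div,
      mul_div_assoc, mul_div_assoc]
  -- convexity of the penalty
  have hcvx := strictConvexOn_rpow_neg hp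
  have hεa : ∀ t ∈ Icc (0:ℝ) 1 \ Nset m f0,
      zfun m u x0 t / iteratedDeriv m f0 t ∈ Ioi (0:ℝ) :=
    fun t ht => lt_of_lt_of_le hε (hu.2.2.1 t ht)
  have hεb : ∀ t ∈ Icc (0:ℝ) 1 \ Nset m f0,
      zfun m u' x0' t / iteratedDeriv m f0 t ∈ Ioi (0:ℝ) :=
    fun t ht => lt_of_lt_of_le hε (hu'.2.2.1 t ht)
  -- pointwise convexity inequality for the penalty integrand
  have hGle : ∀ t ∈ Icc (0:ℝ) 1 \ Nset m f0,
      r t ^ ((1:ℝ) - 1 / (2 * (m:ℝ)))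
          * (zfun m (fun s => α * u s + (1 - α) * u' s) (α • x0 + (1 - α) • x0') t
              / iteratedDeriv m f0 t) ^ (-(1:ℝ) / (2 * (m:ℝ)))
        ≤ α * (r t ^ ((1:ℝ) - 1 / (2 * (m:ℝ)))
              * (zfun m u x0 t / iteratedDeriv m f0 t) ^ (-(1:ℝ) / (2 * (m:ℝ))))
          + (1 - α) * (r t ^ ((1:ℝ) - 1 / (2 * (m:ℝ)))
              * (zfun m u' x0' t / iteratedDeriv m f0 t) ^ (-(1:ℝ) / (2 * (m:ℝ)))) := by
    intro t ht
    have hco := hcvx.convexOn.2 (hεa t ht) (hεb t ht) hα0.le h1α.le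
      (by ring : α + (1 - α) = 1)
    simp only [smul_eq_mul] at hco
    rw [hratio t ht]
    have hrγ0 : 0 ≤ r t ^ ((1:ℝ) - 1 / (2 * (m:ℝ))) :=
      Real.rpow_nonneg (hrpos t (hES ht)).le _
    refine le_trans (mul_le_mul_of_nonneg_left hco hrγ0) (le_of_eq (by ring))
  -- measurability of penalty integrands
  have hrγm : AEStronglyMeasurable (fun t => r t ^ ((1:ℝ) - 1 / (2 * (m:ℝ))))
      (volume.restrict (Icc (0:ℝ) 1 \ Nset m f0)) :=
    ((measurable_id'.pow_const _).comp_aemeasurable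
      ((hrc.mono hES).aemeasurable hEmeas)).aestronglyMeasurable
  have hγbound : ∀ᵐ t ∂(volume.restrict (Icc (0:ℝ) 1 \ Nset m f0)),
      ‖r t ^ ((1:ℝ) - 1 / (2 * (m:ℝ)))‖ ≤ C ^ ((1:ℝ) - 1 / (2 * (m:ℝ))) := by
    rw [ae_restrict_iff' hEmeas]
    refine ae_of_all _ fun t ht => ?_
    have h0 : (0:ℝ) ≤ r t := (hrpos t (hES ht)).le
    rw [Real.norm_eq_abs, abs_of_nonneg (Real.rpow_nonneg h0 _)]
    exact Real.rpow_le_rpow h0 (hrle t (hES ht)) hγ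
  have hFint : IntegrableOn
      (fun t => r t ^ ((1:ℝ) - 1 / (2 * (m:ℝ)))
        * (zfun m u x0 t / iteratedDeriv m f0 t) ^ (-(1:ℝ) / (2 * (m:ℝ))))
      (Icc (0:ℝ) 1 \ Nset m f0) :=
    hu.2.2.2.bdd_mul hrγm hγbound
  have hF'int : IntegrableOn
      (fun t => r t ^ ((1:ℝ) - 1 / (2 * (m:ℝ)))
        * (zfun m u' x0' t / iteratedDeriv m f0 t) ^ (-(1:ℝ) / (2 * (m:ℝ))))
      (Icc (0:ℝ) 1 \ Nset m f0) :=
    hu'.2.2.2.bdd_mul hrγm hγbound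
  have hRHSint : IntegrableOn
      (fun t => α * (r t ^ ((1:ℝ) - 1 / (2 * (m:ℝ)))
          * (zfun m u x0 t / iteratedDeriv m f0 t) ^ (-(1:ℝ) / (2 * (m:ℝ))))
        + (1 - α) * (r t ^ ((1:ℝ) - 1 / (2 * (m:ℝ)))
          * (zfun m u' x0' t / iteratedDeriv m f0 t) ^ (-(1:ℝ) / (2 * (m:ℝ)))))
      (Icc (0:ℝ) 1 \ Nset m f0) :=
    (hFint.const_mul α).add (hF'int.const_mul (1 - α))
  have hGmeas : AEStronglyMeasurable
      (fun t => r t ^ ((1:ℝ) - 1 / (2 * (m:ℝ)))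
        * (zfun m (fun s => α * u s + (1 - α) * u' s) (α • x0 + (1 - α) • x0') t
            / iteratedDeriv m f0 t) ^ (-(1:ℝ) / (2 * (m:ℝ))))
      (volume.restrict (Icc (0:ℝ) 1 \ Nset m f0)) := by
    have hz : AEMeasurable
        (zfun m (fun s => α * u s + (1 - α) * u' s) (α • x0 + (1 - α) • x0'))
        (volume.restrict (Icc (0:ℝ) 1 \ Nset m f0)) :=
      ((zfun_continuousOn m hm _ _ hwI).mono hES).aemeasurable hEmeas
    exact (((measurable_id'.pow_const _).comp_aemeasurable
      ((hrc.mono hES).aemeasurable hEmeas)).mul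
      ((measurable_id'.pow_const _).comp_aemeasurable
        (hz.div hφcont.aemeasurable))).aestronglyMeasurable
  have hGnonneg : ∀ t ∈ Icc (0:ℝ) 1 \ Nset m f0,
      0 ≤ r t ^ ((1:ℝ) - 1 / (2 * (m:ℝ)))
        * (zfun m (fun s => α * u s + (1 - α) * u' s) (α • x0 + (1 - α) • x0') t
            / iteratedDeriv m f0 t) ^ (-(1:ℝ) / (2 * (m:ℝ))) := by
    intro t ht
    apply mul_nonneg (Real.rpow_nonneg (hrpos t (hES ht)).le _)
    apply Real.rpow_nonneg
    rw [hratio t ht]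
    exact add_nonneg (mul_nonneg hα0.le (mem_Ioi.mp (hεa t ht)).le)
      (mul_nonneg h1α.le (mem_Ioi.mp (hεb t ht)).le)
  have hGint : IntegrableOn
      (fun t => r t ^ ((1:ℝ) - 1 / (2 * (m:ℝ)))
        * (zfun m (fun s => α * u s + (1 - α) * u' s) (α • x0 + (1 - α) • x0') t
            / iteratedDeriv m f0 t) ^ (-(1:ℝ) / (2 * (m:ℝ))))
      (Icc (0:ℝ) 1 \ Nset m f0) := by
    apply Integrable.mono' hRHSint hGmeas
    rw [ae_restrict_iff' hEmeas]
    refine ae_of_all _ fun t ht => ?_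
    rw [Real.norm_eq_abs, abs_of_nonneg (hGnonneg t ht)]
    exact hGle t ht
  -- integral convexity inequality for the penalty term
  have hIle : ∫ t in Icc (0:ℝ) 1 \ Nset m f0,
        r t ^ ((1:ℝ) - 1 / (2 * (m:ℝ)))
          * (zfun m (fun s => α * u s + (1 - α) * u' s) (α • x0 + (1 - α) • x0') t
              / iteratedDeriv m f0 t) ^ (-(1:ℝ) / (2 * (m:ℝ)))
      ≤ α * (∫ t in Icc (0:ℝ) 1 \ Nset m f0,
            r t ^ ((1:ℝ) - 1 / (2 * (m:ℝ)))
              * (zfun m u x0 t / iteratedDeriv m f0 t) ^ (-(1:ℝ) / (2 * (m:ℝ))))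
        + (1 - α) * (∫ t in Icc (0:ℝ) 1 \ Nset m f0,
            r t ^ ((1:ℝ) - 1 / (2 * (m:ℝ)))
              * (zfun m u' x0' t / iteratedDeriv m f0 t) ^ (-(1:ℝ) / (2 * (m:ℝ)))) := by
    have := setIntegral_mono_on hGint hRHSint hEmeas hGle
    rwa [integral_add (hFint.const_mul α) (hF'int.const_mul (1 - α)),
      integral_const_mul, integral_const_mul] at this
  simp only [Jfun]
  by_cases hae : u =ᵐ[volume.restrict (Icc (0 : ℝ) 1)] u'
  · -- Case 2 : u = u' a.e., so x0 ≠ x0'; strictness comes from the penalty term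
    have hx0ne : x0 ≠ x0' := fun h => hdist ⟨hae, h⟩
    -- quadratic difference term vanishes
    have hD0 : ∫ t in Icc (0:ℝ) 1, r t ^ 2 * (u t - u' t) ^ 2 = 0 := by
      have hz : (fun t => r t ^ 2 * (u t - u' t) ^ 2)
          =ᵐ[volume.restrict (Icc (0:ℝ) 1)] fun _ => (0:ℝ) := by
        filter_upwards [hae] with t ht
        rw [ht]; ring
      rw [integral_congr_ae hz, integral_zero]
    -- the polynomial difference
    obtain ⟨j0, hj0⟩ : ∃ j, x0 j ≠ x0' j := by
      by_contra h
      push_neg at h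
      exact hx0ne (by ext j; exact h j)
    have hc0 : (x0 j0 - x0' j0) / ((j0 : ℕ).factorial : ℝ) ≠ 0 :=
      div_ne_zero (sub_ne_zero.mpr hj0) (Nat.cast_ne_zero.mpr (Nat.factorial_ne_zero _))
    have hZfin : {t : ℝ | ∑ j : Fin m,
        ((x0 j - x0' j) / ((j : ℕ).factorial : ℝ)) * t ^ (j : ℕ) = 0}.Finite :=
      JSC_finite_zero_set _ j0 hc0
    have hZ0 : volume {t : ℝ | ∑ j : Fin m,
        ((x0 j - x0' j) / ((j : ℕ).factorial : ℝ)) * t ^ (j : ℕ) = 0} = 0 :=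
      hZfin.measure_zero _
    -- z-difference identity
    have hzdiff : ∀ t ∈ Icc (0:ℝ) 1,
        zfun m u x0 t - zfun m u' x0' t
          = ∑ j : Fin m, ((x0 j - x0' j) / ((j : ℕ).factorial : ℝ)) * t ^ (j : ℕ) := by
      intro t ht
      unfold zfun
      rw [dmInv_congr u u' hae m hm t ht]
      rw [add_sub_add_left_eq_sub, ← Finset.sum_sub_distrib]
      apply Finset.sum_congr rfl
      intro j _
      ring
    -- pointwise strict inequality off the finite zero set
    have hstrictpt : ∀ t ∈ (Icc (0:ℝ) 1 \ Nset m f0) \ {t : ℝ | ∑ j : Fin m,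
        ((x0 j - x0' j) / ((j : ℕ).factorial : ℝ)) * t ^ (j : ℕ) = 0},
        r t ^ ((1:ℝ) - 1 / (2 * (m:ℝ)))
            * (zfun m (fun s => α * u s + (1 - α) * u' s) (α • x0 + (1 - α) • x0') t
                / iteratedDeriv m f0 t) ^ (-(1:ℝ) / (2 * (m:ℝ)))
          < α * (r t ^ ((1:ℝ) - 1 / (2 * (m:ℝ)))
                * (zfun m u x0 t / iteratedDeriv m f0 t) ^ (-(1:ℝ) / (2 * (m:ℝ))))
            + (1 - α) * (r t ^ ((1:ℝ) - 1 / (2 * (m:ℝ)))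
                * (zfun m u' x0' t / iteratedDeriv m f0 t) ^ (-(1:ℝ) / (2 * (m:ℝ)))) := by
      rintro t ⟨ht, htZ⟩
      have hAB : zfun m u x0 t / iteratedDeriv m f0 t
          ≠ zfun m u' x0' t / iteratedDeriv m f0 t := by
        rw [← sub_ne_zero, div_sub_div_same, hzdiff t (hES ht)]
        exact div_ne_zero (fun h => htZ h) (hφne t ht)
      have hco := hcvx.2 (hεa t ht) (hεb t ht) hAB hα0 h1α (by ring : α + (1 - α) = 1)
      simp only [smul_eq_mul] at hco
      rw [hratio t ht]
      have hrγpos : 0 < r t ^ ((1:ℝ) - 1 / (2 * (m:ℝ))) :=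
        Real.rpow_pos_of_pos (hrpos t (hES ht)) _
      calc r t ^ ((1:ℝ) - 1 / (2 * (m:ℝ)))
            * (α * (zfun m u x0 t / iteratedDeriv m f0 t)
              + (1 - α) * (zfun m u' x0' t / iteratedDeriv m f0 t))
                ^ (-(1:ℝ) / (2 * (m:ℝ)))
          < r t ^ ((1:ℝ) - 1 / (2 * (m:ℝ)))
            * (α * (zfun m u x0 t / iteratedDeriv m f0 t) ^ (-(1:ℝ) / (2 * (m:ℝ)))
              + (1 - α) * (zfun m u' x0' t / iteratedDeriv m f0 t)
                  ^ (-(1:ℝ) / (2 * (m:ℝ)))) := by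
            exact mul_lt_mul_of_pos_left hco hrγpos
        _ = _ := by ring
    -- strict integral inequality
    have hIlt : ∫ t in Icc (0:ℝ) 1 \ Nset m f0,
          r t ^ ((1:ℝ) - 1 / (2 * (m:ℝ)))
            * (zfun m (fun s => α * u s + (1 - α) * u' s) (α • x0 + (1 - α) • x0') t
                / iteratedDeriv m f0 t) ^ (-(1:ℝ) / (2 * (m:ℝ)))
        < α * (∫ t in Icc (0:ℝ) 1 \ Nset m f0,
              r t ^ ((1:ℝ) - 1 / (2 * (m:ℝ)))
                * (zfun m u x0 t / iteratedDeriv m f0 t) ^ (-(1:ℝ) / (2 * (m:ℝ))))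
          + (1 - α) * (∫ t in Icc (0:ℝ) 1 \ Nset m f0,
              r t ^ ((1:ℝ) - 1 / (2 * (m:ℝ)))
                * (zfun m u' x0' t / iteratedDeriv m f0 t) ^ (-(1:ℝ) / (2 * (m:ℝ)))) := by
      have hHint : IntegrableOn (fun t =>
          (α * (r t ^ ((1:ℝ) - 1 / (2 * (m:ℝ)))
              * (zfun m u x0 t / iteratedDeriv m f0 t) ^ (-(1:ℝ) / (2 * (m:ℝ))))
            + (1 - α) * (r t ^ ((1:ℝ) - 1 / (2 * (m:ℝ)))
              * (zfun m u' x0' t / iteratedDeriv m f0 t) ^ (-(1:ℝ) / (2 * (m:ℝ)))))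
          - r t ^ ((1:ℝ) - 1 / (2 * (m:ℝ)))
              * (zfun m (fun s => α * u s + (1 - α) * u' s) (α • x0 + (1 - α) • x0') t
                  / iteratedDeriv m f0 t) ^ (-(1:ℝ) / (2 * (m:ℝ))))
          (Icc (0:ℝ) 1 \ Nset m f0) := hRHSint.sub hGint
      have hH0 : (0 : ℝ → ℝ) ≤ᵐ[volume.restrict (Icc (0:ℝ) 1 \ Nset m f0)] fun t =>
          (α * (r t ^ ((1:ℝ) - 1 / (2 * (m:ℝ)))
              * (zfun m u x0 t / iteratedDeriv m f0 t) ^ (-(1:ℝ) / (2 * (m:ℝ))))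
            + (1 - α) * (r t ^ ((1:ℝ) - 1 / (2 * (m:ℝ)))
              * (zfun m u' x0' t / iteratedDeriv m f0 t) ^ (-(1:ℝ) / (2 * (m:ℝ)))))
          - r t ^ ((1:ℝ) - 1 / (2 * (m:ℝ)))
              * (zfun m (fun s => α * u s + (1 - α) * u' s) (α • x0 + (1 - α) • x0') t
                  / iteratedDeriv m f0 t) ^ (-(1:ℝ) / (2 * (m:ℝ))) :=
        (ae_restrict_iff' hEmeas).mpr (ae_of_all _ fun t ht =>
          sub_nonneg.mpr (hGle t ht))
      have hpos := (setIntegral_pos_iff_support_of_nonneg_ae hH0 hHint).mpr ?_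
      · rw [integral_sub hRHSint hGint, sub_pos,
          integral_add (hFint.const_mul α) (hF'int.const_mul (1 - α)),
          integral_const_mul, integral_const_mul] at hpos
        exact hpos
      · have hsub : (Icc (0:ℝ) 1 \ Nset m f0) \ {t : ℝ | ∑ j : Fin m,
            ((x0 j - x0' j) / ((j : ℕ).factorial : ℝ)) * t ^ (j : ℕ) = 0}
            ⊆ Function.support (fun t =>
                (α * (r t ^ ((1:ℝ) - 1 / (2 * (m:ℝ)))
                    * (zfun m u x0 t / iteratedDeriv m f0 t) ^ (-(1:ℝ) / (2 * (m:ℝ))))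
                  + (1 - α) * (r t ^ ((1:ℝ) - 1 / (2 * (m:ℝ)))
                    * (zfun m u' x0' t / iteratedDeriv m f0 t) ^ (-(1:ℝ) / (2 * (m:ℝ)))))
                - r t ^ ((1:ℝ) - 1 / (2 * (m:ℝ)))
                    * (zfun m (fun s => α * u s + (1 - α) * u' s) (α • x0 + (1 - α) • x0') t
                        / iteratedDeriv m f0 t) ^ (-(1:ℝ) / (2 * (m:ℝ))))
              ∩ (Icc (0:ℝ) 1 \ Nset m f0) := by
          rintro t ⟨ht, htZ⟩
          exact ⟨Function.mem_support.mpr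
            (sub_pos.mpr (hstrictpt t ⟨ht, htZ⟩)).ne', ht⟩
        refine lt_of_lt_of_le ?_ (measure_mono hsub)
        rw [measure_diff_null hZ0, measure_diff_null hN]
        simp [Real.volume_Icc]
    have hexp : L0 * ∫ t in Icc (0:ℝ) 1 \ Nset m f0,
          r t ^ ((1:ℝ) - 1 / (2 * (m:ℝ)))
            * (zfun m (fun s => α * u s + (1 - α) * u' s) (α • x0 + (1 - α) • x0') t
                / iteratedDeriv m f0 t) ^ (-(1:ℝ) / (2 * (m:ℝ)))
        < L0 * (α * (∫ t in Icc (0:ℝ) 1 \ Nset m f0,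
              r t ^ ((1:ℝ) - 1 / (2 * (m:ℝ)))
                * (zfun m u x0 t / iteratedDeriv m f0 t) ^ (-(1:ℝ) / (2 * (m:ℝ))))
          + (1 - α) * (∫ t in Icc (0:ℝ) 1 \ Nset m f0,
              r t ^ ((1:ℝ) - 1 / (2 * (m:ℝ)))
                * (zfun m u' x0' t / iteratedDeriv m f0 t) ^ (-(1:ℝ) / (2 * (m:ℝ))))) :=
      mul_lt_mul_of_pos_left hIlt hL0
    rw [hD0, mul_zero, sub_zero] at hQid
    linarith [hQid, hexp]
  · -- Case 1 : u ≠ u' a.e.; strictness comes from the quadratic term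
    have hDpos : 0 < ∫ t in Icc (0:ℝ) 1, r t ^ 2 * (u t - u' t) ^ 2 := by
      rw [setIntegral_pos_iff_support_of_nonneg_ae
        (ae_of_all _ fun t => by positivity) hQd]
      rw [pos_iff_ne_zero]
      intro h0'
      apply hae
      have hsub : {t | ¬ u t = u' t} ∩ Icc (0:ℝ) 1
          ⊆ Function.support (fun t => r t ^ 2 * (u t - u' t) ^ 2) ∩ Icc (0:ℝ) 1 := by
        rintro t ⟨htne, htI⟩
        refine ⟨?_, htI⟩
        simp only [Function.mem_support]
        intro hzero
        apply htne
        rcases mul_eq_zero.mp hzero with h | h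
        · exact ((hrpos t htI).ne' ((pow_eq_zero_iff two_ne_zero).mp h)).elim
        · have := (pow_eq_zero_iff two_ne_zero).mp h
          linarith [sub_eq_zero.mp this]
      have hnull : volume ({t | ¬ u t = u' t} ∩ Icc (0:ℝ) 1) = 0 :=
        measure_mono_null hsub h0'
      rw [Filter.EventuallyEq, ae_iff, Measure.restrict_apply' measurableSet_Icc]
      exact hnull
    have hQle : L0 * ∫ t in Icc (0:ℝ) 1 \ Nset m f0,
          r t ^ ((1:ℝ) - 1 / (2 * (m:ℝ)))
            * (zfun m (fun s => α * u s + (1 - α) * u' s) (α • x0 + (1 - α) • x0') t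
                / iteratedDeriv m f0 t) ^ (-(1:ℝ) / (2 * (m:ℝ)))
        ≤ L0 * (α * (∫ t in Icc (0:ℝ) 1 \ Nset m f0,
              r t ^ ((1:ℝ) - 1 / (2 * (m:ℝ)))
                * (zfun m u x0 t / iteratedDeriv m f0 t) ^ (-(1:ℝ) / (2 * (m:ℝ))))
          + (1 - α) * (∫ t in Icc (0:ℝ) 1 \ Nset m f0,
              r t ^ ((1:ℝ) - 1 / (2 * (m:ℝ)))
                * (zfun m u' x0' t / iteratedDeriv m f0 t) ^ (-(1:ℝ) / (2 * (m:ℝ))))) :=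
      mul_le_mul_of_nonneg_left hIle hL0.le
    linarith [hQid, hQle, mul_pos (mul_pos hα0 h1α) hDpos]

end
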